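/- Let F be a differential field of characteristic zero with derivation ∂, let M ∈ M_n(F), and let P ∈ M_n(F) be invertible with P[M] = diag(C^{(1)}, ..., C^{(t)}), where C^{(i)} is a companion matrix of dimension k_i with last row (c^{(i)}_0, ..., c^{(i)}_{k_i−1}) and k_1 + ... + k_t = n. Then a column vector Y ∈ F^n satisfies ∂Y = MY if and only if there exist z^{(1)}, ..., z^{(t)} ∈ F such that PY is the vertical concatenation of the column vectors Z^{(i)} = (z^{(i)}, ∂z^{(i)}, ..., ∂^{k_i−1} z^{(i)})ᵀ and, for every i, ∂^{k_i} z^{(i)} = c^{(i)}_{k_i−1} ∂^{k_i−1} z^{(i)} + ... + c^{(i)}_0 z^{(i)}. -/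

import Mathlib

/-- The gauge transform of `A` by an invertible `P`: `P[A] = (P A + ∂P) P⁻¹`. -/
noncomputable def cvGauge {F : Type*} [Field F] {n : ℕ} (der : F → F)
    (P A : Matrix (Fin n) (Fin n) F) : Matrix (Fin n) (Fin n) F :=
  (P * A + P.map der) * P⁻¹

/-- A `k × k` matrix is companion if its rows `1, …, k−1` are the standard
basis rows `e_2, …, e_k` (its last row being arbitrary). -/
def IsCompanionMat {F : Type*} [Field F] {k : ℕ} (C : Matrix (Fin k) (Fin k) F) : Prop :=
  ∀ i j : Fin k, (i : ℕ) + 1 < k → C i j = if (j : ℕ) = (i : ℕ) + 1 then 1 else 0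

lemma der_sum_aux {F : Type*} [Field F] (der : F → F)
    (h_add : ∀ a b : F, der (a + b) = der a + der b)
    {ι : Type*} (s : Finset ι) (f : ι → F) :
    der (∑ x ∈ s, f x) = ∑ x ∈ s, der (f x) := by
  have h0 : der 0 = 0 := by
    have h := h_add 0 0
    rw [add_zero] at h
    exact (left_eq_add.mp h)
  classical
  induction s using Finset.induction with
  | empty => simpa
  | @insert a s h ih => rw [Finset.sum_insert h, Finset.sum_insert h, h_add, ih]

/-- If `P[M] = diag(C⁽¹⁾, …, C⁽ᵗ⁾)` with companion blocks `C⁽ⁱ⁾` of sizes `k i`,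
then `∂Y = M Y` iff `P Y` is the vertical concatenation of the vectors
`(z i, ∂(z i), …, ∂^{k i − 1}(z i))ᵀ` for scalars `z i` satisfying the scalar
equations `∂^{k i}(z i) = Σ_l c^{(i)}_l ∂^l (z i)` given by the last rows of
the companion blocks.  Here `e` is the order-preserving identification of
`Σ i, Fin (k i)` with `Fin n` placing the blocks consecutively. -/
theorem uncoupling_solutions {F : Type*} [Field F] [CharZero F] {n t : ℕ}
    (der : F → F)
    (h_add : ∀ a b : F, der (a + b) = der a + der b)
    (h_mul : ∀ a b : F, der (a * b) = a * der b + der a * b)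
    (M P : Matrix (Fin n) (Fin n) F) (hP : IsUnit P.det)
    (k : Fin t → ℕ) (hk0 : ∀ i, 0 < k i) (hk : ∑ i, k i = n)
    (C : (i : Fin t) → Matrix (Fin (k i)) (Fin (k i)) F)
    (hC : ∀ i, IsCompanionMat (C i))
    (e : (Σ i : Fin t, Fin (k i)) ≃ Fin n)
    (he : ∀ (i : Fin t) (a : Fin (k i)),
      ((e ⟨i, a⟩ : Fin n) : ℕ) = (∑ l ∈ Finset.univ.filter fun l => l < i, k l) + (a : ℕ))
    (hdiag : cvGauge der P M = Matrix.reindex e e (Matrix.blockDiagonal' C))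
    (Y : Fin n → F) :
    (fun r => der (Y r)) = M.mulVec Y ↔
    ∃ z : Fin t → F,
      (∀ (i : Fin t) (a : Fin (k i)), P.mulVec Y (e ⟨i, a⟩) = der^[(a : ℕ)] (z i)) ∧
      ∀ i : Fin t, der^[k i] (z i) =
        ∑ l : Fin (k i), C i ⟨k i - 1, Nat.sub_lt (hk0 i) Nat.one_pos⟩ l * der^[(l : ℕ)] (z i) := by
  classical
  set W : Fin n → F := P.mulVec Y with hWdef
  have hPinv : P⁻¹ * P = 1 := Matrix.nonsing_inv_mul P hP
  -- derivative of P.mulVec Z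
  have hderW : ∀ Z : Fin n → F, (fun r => der (P.mulVec Z r))
      = P.mulVec (fun r => der (Z r)) + (P.map der).mulVec Z := by
    intro Z
    funext r
    simp only [Matrix.mulVec, dotProduct, Pi.add_apply, Matrix.map_apply]
    rw [der_sum_aux der h_add, ← Finset.sum_add_distrib]
    exact Finset.sum_congr rfl fun j _ => h_mul (P r j) (Z j)
  -- Step 1: ∂Y = MY ↔ ∂W = G W
  have key : ((fun r => der (Y r)) = M.mulVec Y) ↔
      ((fun r => der (W r)) = (cvGauge der P M).mulVec W) := by
    have hG : (cvGauge der P M).mulVec W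
        = P.mulVec (M.mulVec Y) + (P.map der).mulVec Y := by
      rw [hWdef]
      unfold cvGauge
      rw [Matrix.mulVec_mulVec, mul_assoc, hPinv, mul_one, Matrix.add_mulVec,
        ← Matrix.mulVec_mulVec]
    constructor
    · intro h
      rw [hWdef, hderW, h, hG]
    · intro h
      rw [hWdef, hderW, hG] at h
      have h2 : P.mulVec (fun r => der (Y r)) = P.mulVec (M.mulVec Y) :=
        add_right_cancel h
      have h3 : ∀ v : Fin n → F, P⁻¹.mulVec (P.mulVec v) = v := by
        intro v; rw [Matrix.mulVec_mulVec, hPinv, Matrix.one_mulVec]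
      have h4 := congrArg (fun v => P⁻¹.mulVec v) h2
      change P⁻¹.mulVec (P.mulVec _) = P⁻¹.mulVec (P.mulVec _) at h4
      rw [h3, h3] at h4
      exact h4
  rw [key, hdiag]
  -- transport along e
  set V : (Σ i : Fin t, Fin (k i)) → F := fun s => W (e s) with hVdef
  have hmv : ∀ s : Σ i : Fin t, Fin (k i),
      ((Matrix.reindex e e (Matrix.blockDiagonal' C)).mulVec W) (e s)
        = ∑ b : Fin (k s.1), C s.1 s.2 b * V ⟨s.1, b⟩ := by
    rintro ⟨i, a⟩
    simp only [Matrix.mulVec, dotProduct, Matrix.reindex_apply,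
      Matrix.submatrix_apply, Equiv.symm_apply_apply]
    rw [← Fintype.sum_equiv e
      (fun s : Σ j : Fin t, Fin (k j) => Matrix.blockDiagonal' C ⟨i, a⟩ s * V s)
      (fun c => Matrix.blockDiagonal' C ⟨i, a⟩ (e.symm c) * W c)
      (fun s => by simp [hVdef])]
    rw [show (Finset.univ : Finset (Σ j : Fin t, Fin (k j)))
        = Finset.univ.sigma fun _ => Finset.univ from rfl, Finset.sum_sigma]
    rw [Finset.sum_eq_single i]
    · apply Finset.sum_congr rfl
      intro b _
      simp [Matrix.blockDiagonal'_apply]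
    · intro j _ hj
      apply Finset.sum_eq_zero
      intro b _
      simp [Matrix.blockDiagonal'_apply, (Ne.symm hj)]
    · simp
  -- the system in terms of V
  have hsys : ((fun r => der (W r)) = (Matrix.reindex e e (Matrix.blockDiagonal' C)).mulVec W)
      ↔ ∀ (i : Fin t) (a : Fin (k i)),
          der (V ⟨i, a⟩) = ∑ b : Fin (k i), C i a b * V ⟨i, b⟩ := by
    constructor
    · intro h i a
      have := congrFun h (e ⟨i, a⟩)
      rw [hmv ⟨i, a⟩] at this
      exact this
    · intro h
      funext r
      have hr : r = e (e.symm r) := (e.apply_symm_apply r).symm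
      rw [hr, hmv (e.symm r)]
      exact h (e.symm r).1 (e.symm r).2
  rw [hsys]
  constructor
  · intro hV
    refine ⟨fun i => V ⟨i, ⟨0, hk0 i⟩⟩, ?_, ?_⟩
    · -- each coordinate is an iterated derivative
      have step : ∀ (i : Fin t) (m : ℕ) (h : m < k i),
          V ⟨i, ⟨m, h⟩⟩ = der^[m] (V ⟨i, ⟨0, hk0 i⟩⟩) := by
        intro i m
        induction m with
        | zero => intro h; simp
        | succ m ih =>
          intro h
          have hm : m < k i := Nat.lt_of_succ_lt h
          have hrow := hV i ⟨m, hm⟩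
          have hcomp : ∀ b : Fin (k i), C i ⟨m, hm⟩ b
              = if (b : ℕ) = m + 1 then 1 else 0 := fun b => hC i ⟨m, hm⟩ b h
          have : der (V ⟨i, ⟨m, hm⟩⟩) = V ⟨i, ⟨m + 1, h⟩⟩ := by
            rw [hrow]
            rw [Finset.sum_congr rfl fun b _ => by rw [hcomp b]]
            rw [show (fun b : Fin (k i) => (if (b : ℕ) = m + 1 then (1:F) else 0) * V ⟨i, b⟩)
              = fun b : Fin (k i) => if b = ⟨m+1, h⟩ then V ⟨i, b⟩ else 0 from ?_]
            · rw [Finset.sum_ite_eq' Finset.univ (⟨m+1, h⟩ : Fin (k i))]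
              simp
            · funext b
              by_cases hb : (b : ℕ) = m + 1
              · have : b = ⟨m+1, h⟩ := Fin.ext hb
                simp [this]
              · have : b ≠ ⟨m+1, h⟩ := fun hh => hb (by rw [hh])
                simp [hb, this]
          rw [← this, ih hm, ← Function.iterate_succ_apply' der m]
      intro i a
      have := step i (a : ℕ) a.isLt
      have ha : (⟨(a : ℕ), a.isLt⟩ : Fin (k i)) = a := Fin.ext rfl
      rw [ha] at this
      exact this
    · intro i
      have hlast : k i - 1 < k i := Nat.sub_lt (hk0 i) Nat.one_pos
      have hrow := hV i ⟨k i - 1, hlast⟩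
      have step : ∀ (m : ℕ) (h : m < k i),
          V ⟨i, ⟨m, h⟩⟩ = der^[m] (V ⟨i, ⟨0, hk0 i⟩⟩) := by
        intro m
        induction m with
        | zero => intro h; simp
        | succ m ih =>
          intro h
          have hm : m < k i := Nat.lt_of_succ_lt h
          have hrow := hV i ⟨m, hm⟩
          have hcomp : ∀ b : Fin (k i), C i ⟨m, hm⟩ b
              = if (b : ℕ) = m + 1 then 1 else 0 := fun b => hC i ⟨m, hm⟩ b h
          have : der (V ⟨i, ⟨m, hm⟩⟩) = V ⟨i, ⟨m + 1, h⟩⟩ := by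
            rw [hrow]
            rw [Finset.sum_congr rfl fun b _ => by rw [hcomp b]]
            rw [show (fun b : Fin (k i) => (if (b : ℕ) = m + 1 then (1:F) else 0) * V ⟨i, b⟩)
              = fun b : Fin (k i) => if b = ⟨m+1, h⟩ then V ⟨i, b⟩ else 0 from ?_]
            · rw [Finset.sum_ite_eq' Finset.univ (⟨m+1, h⟩ : Fin (k i))]
              simp
            · funext b
              by_cases hb : (b : ℕ) = m + 1
              · have : b = ⟨m+1, h⟩ := Fin.ext hb
                simp [this]
              · have : b ≠ ⟨m+1, h⟩ := fun hh => hb (by rw [hh])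
                simp [hb, this]
          rw [← this, ih hm, ← Function.iterate_succ_apply' der m]
      have hk1 : k i = (k i - 1) + 1 := (Nat.succ_pred_eq_of_pos (hk0 i)).symm
      have iter_eq : ∀ x : F, der^[k i] x = der (der^[k i - 1] x) := by
        intro x
        conv_lhs => rw [hk1]
        rw [Function.iterate_succ_apply' der (k i - 1)]
      calc der^[k i] (V ⟨i, ⟨0, hk0 i⟩⟩)
          = der (der^[k i - 1] (V ⟨i, ⟨0, hk0 i⟩⟩)) := iter_eq _
        _ = der (V ⟨i, ⟨k i - 1, hlast⟩⟩) := by rw [step (k i - 1) hlast]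
        _ = ∑ b : Fin (k i), C i ⟨k i - 1, hlast⟩ b * V ⟨i, b⟩ := hrow
        _ = _ := by
            apply Finset.sum_congr rfl
            intro b _
            rw [show (b : Fin (k i)) = ⟨(b : ℕ), b.isLt⟩ from Fin.ext rfl,
              step (b : ℕ) b.isLt]
  · rintro ⟨z, hz1, hz2⟩
    intro i a
    have hVa : ∀ b : Fin (k i), V ⟨i, b⟩ = der^[(b : ℕ)] (z i) := fun b => hz1 i b
    rw [hVa a]
    rw [Finset.sum_congr rfl fun b _ => by rw [hVa b]]
    by_cases h : (a : ℕ) + 1 < k i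
    · have hcomp : ∀ b : Fin (k i), C i a b
          = if (b : ℕ) = (a : ℕ) + 1 then 1 else 0 := fun b => hC i a b h
      rw [Finset.sum_congr rfl fun b _ => by rw [hcomp b]]
      rw [show (fun b : Fin (k i) => (if (b : ℕ) = (a:ℕ) + 1 then (1:F) else 0) * der^[(b:ℕ)] (z i))
        = fun b : Fin (k i) => if b = ⟨(a:ℕ)+1, h⟩ then der^[(b:ℕ)] (z i) else 0 from ?_]
      · rw [Finset.sum_ite_eq' Finset.univ (⟨(a:ℕ)+1, h⟩ : Fin (k i))]
        simp [Function.iterate_succ_apply' der (a : ℕ)]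
      · funext b
        by_cases hb : (b : ℕ) = (a : ℕ) + 1
        · have : b = ⟨(a:ℕ)+1, h⟩ := Fin.ext hb
          simp [this]
        · have : b ≠ ⟨(a:ℕ)+1, h⟩ := fun hh => hb (by rw [hh])
          simp [hb, this]
    · have ha : (a : ℕ) = k i - 1 := by omega
      have hlast : (a : Fin (k i)) = ⟨k i - 1, Nat.sub_lt (hk0 i) Nat.one_pos⟩ := Fin.ext ha
      rw [hlast, ← hz2 i]
      show der (der^[k i - 1] (z i)) = der^[k i] (z i)
      have iter_eq : ∀ x : F, der^[k i] x = der (der^[k i - 1] x) := by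
        intro x
        conv_lhs => rw [show k i = (k i - 1) + 1 from (Nat.succ_pred_eq_of_pos (hk0 i)).symm]
        rw [Function.iterate_succ_apply' der (k i - 1)]
      rw [iter_eq]
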